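/- arXiv:1910.00958 — 5 statements merged into one kernel-verified Lean document; each statement's English description precedes it below -/
import Mathlib

section
/- If p ≥ 3 is an even integer and λ ∈ ℝ \ {0}, then |f_λ(x)| ≥ p·|λ| for every real number x; in particular f_λ has no zeros on the real line. -/
open Complex Finset

theorem f_lambda_abs_ge_on_real (p : ℕ) (hp : 3 ≤ p) (hpeven : Even p)
    (lam : ℝ) (hlam : lam ≠ 0)
    (f : ℂ → ℂ)
    (hf : ∀ z : ℂ, f z = lam * ∑ k ∈ Finset.range p,
      Complex.exp ((Complex.exp (2 * Real.pi * Complex.I / p)) ^ k * z))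
    (x : ℝ) : p * |lam| ≤ ‖f x‖ := by
  have hp0 : p ≠ 0 := by omega
  set ω : ℂ := Complex.exp (2 * Real.pi * Complex.I / p) with hω
  have hprim : IsPrimitiveRoot ω p := Complex.isPrimitiveRoot_exp p hp0
  set g : ℕ → ℝ := fun n => (if p ∣ n then (p : ℝ) else 0) * x ^ n / n.factorial
    with hgdef
  have hg_nonneg : ∀ n, 0 ≤ g n := by
    intro n
    by_cases h : p ∣ n
    · have hn : Even n := even_iff_two_dvd.mpr (dvd_trans hpeven.two_dvd h)
      have hx : (0:ℝ) ≤ x ^ n := hn.pow_nonneg x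
      simp only [hgdef, if_pos h]
      positivity
    · simp [hgdef, if_neg h]
  have hg_le : ∀ n, g n ≤ (p : ℝ) * |x| ^ n / n.factorial := by
    intro n
    by_cases h : p ∣ n
    · simp only [hgdef, if_pos h]
      have : x ^ n ≤ |x| ^ n := by
        calc x ^ n ≤ |x ^ n| := le_abs_self _
        _ = |x| ^ n := abs_pow x n
      apply div_le_div_of_nonneg_right ?_ (by positivity)
      · exact mul_le_mul_of_nonneg_left this (by positivity)
    · simp only [hgdef, if_neg h, zero_mul, zero_div]
      positivity
  have hsum_maj : Summable fun n => (p : ℝ) * |x| ^ n / n.factorial := by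
    simpa [mul_div_assoc] using (Real.summable_pow_div_factorial |x|).mul_left (p : ℝ)
  have hgsum : Summable g := Summable.of_nonneg_of_le hg_nonneg hg_le hsum_maj
  -- key term identity
  have key : ∀ n : ℕ, (∑ k ∈ Finset.range p, (ω ^ k * (x:ℂ)) ^ n / n.factorial)
      = ((g n : ℝ) : ℂ) := by
    intro n
    have h1 : ∀ k, (ω ^ k * (x:ℂ)) ^ n / n.factorial
        = (ω ^ n) ^ k * ((x:ℂ) ^ n / n.factorial) := by
      intro k
      rw [mul_pow, ← pow_mul, ← pow_mul, Nat.mul_comm k n]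
      ring
    rw [Finset.sum_congr rfl (fun k _ => h1 k), ← Finset.sum_mul]
    have h2 : (∑ k ∈ Finset.range p, (ω ^ n) ^ k) = if p ∣ n then (p : ℂ) else 0 := by
      by_cases h : p ∣ n
      · have : ω ^ n = 1 := (hprim.pow_eq_one_iff_dvd n).mpr h
        simp [this, h]
      · have hne : ω ^ n ≠ 1 := fun hc => h ((hprim.pow_eq_one_iff_dvd n).mp hc)
        rw [geom_sum_eq hne, if_neg h, ← pow_mul, Nat.mul_comm, pow_mul, hprim.pow_eq_one]
        simp
      
    rw [h2, hgdef]
    push_cast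
    by_cases h : p ∣ n <;> simp [h] <;> ring
  -- the sum of exponentials equals the real series
  have hS : (∑ k ∈ Finset.range p, Complex.exp (ω ^ k * (x:ℂ)))
      = ((∑' n, g n : ℝ) : ℂ) := by
    have hexp : ∀ k, Complex.exp (ω ^ k * (x:ℂ))
        = ∑' n : ℕ, (ω ^ k * (x:ℂ)) ^ n / n.factorial := by
      intro k
      rw [Complex.exp_eq_exp_ℂ, NormedSpace.exp_eq_tsum_div]
    rw [Finset.sum_congr rfl (fun k _ => hexp k),
      ← Summable.tsum_finsetSum (fun k _ => NormedSpace.expSeries_div_summable (𝔸 := ℂ) (ω ^ k * (x:ℂ))),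
      Complex.ofReal_tsum]
    exact tsum_congr key
  set T : ℝ := ∑' n, g n with hT
  have hT_ge : (p : ℝ) ≤ T := by
    have h0 : g 0 = p := by simp [hgdef]
    calc (p:ℝ) = g 0 := h0.symm
    _ ≤ T := Summable.le_tsum hgsum 0 (fun i _ => hg_nonneg i)
  have habs : ‖f x‖ = |lam| * T := by
    rw [hf, hS, ← Complex.ofReal_mul, Complex.norm_real, Real.norm_eq_abs, abs_mul,
      _root_.abs_of_nonneg (le_trans (by positivity) hT_ge)]
  rw [habs]
  calc (p : ℝ) * |lam| = |lam| * p := by ring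
  _ ≤ |lam| * T := mul_le_mul_of_nonneg_left hT_ge (abs_nonneg lam)
end

section
/- Let p ≥ 3 be an integer and define g : (0,∞) → ℝ by g(x) = (p/x)(1 + x^p/p!). Then x* = (p·(p−2)!)^{1/p} is the unique global minimizer of g on (0,∞), the minimum value is g(x*) = (p/(p·(p−2)!)^{1/p})·(1 + 1/(p−1)), and this minimum value is strictly greater than 1. -/
theorem g_unique_min (p : ℕ) (hp : 3 ≤ p)
    (g : ℝ → ℝ)
    (hg : ∀ x : ℝ, 0 < x → g x = ((p : ℝ) / x) * (1 + x ^ p / (Nat.factorial p : ℝ)))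
    (xstar : ℝ)
    (hxstar : xstar = ((p : ℝ) * (Nat.factorial (p - 2) : ℝ)) ^ ((1 : ℝ) / p)) :
    (0 < xstar) ∧
    (∀ x : ℝ, 0 < x → g xstar ≤ g x) ∧
    (∀ x : ℝ, 0 < x → x ≠ xstar → g xstar < g x) ∧
    g xstar = ((p : ℝ) / ((p : ℝ) * (Nat.factorial (p - 2) : ℝ)) ^ ((1 : ℝ) / p)) *
      (1 + 1 / ((p : ℝ) - 1)) ∧
    1 < g xstar := by
  obtain ⟨n, rfl⟩ : ∃ n, p = n + 3 := ⟨p - 3, by omega⟩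
  have hp2 : n + 3 - 2 = n + 1 := by omega
  rw [hp2] at hxstar ⊢
  set c : ℝ := ((n + 3 : ℕ) : ℝ) * ((n + 1).factorial : ℝ) with hcdef
  have hc : 0 < c := by positivity
  have hne : ((n + 3 : ℕ) : ℝ) ≠ 0 := by positivity
  have hxpos : 0 < xstar := hxstar ▸ Real.rpow_pos_of_pos hc _
  -- xstar ^ (n+3) = c
  have hxp : xstar ^ (n + 3) = c := by
    rw [hxstar, ← Real.rpow_natCast _ (n + 3), ← Real.rpow_mul hc.le, one_div,
      inv_mul_cancel₀ hne, Real.rpow_one]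
  -- factorial facts
  have hfac : ((n + 3).factorial : ℝ) =
      ((n + 3 : ℕ) : ℝ) * ((n + 2 : ℕ) : ℝ) * ((n + 1).factorial : ℝ) := by
    have : (n + 3).factorial = (n + 3) * ((n + 2) * (n + 1).factorial) := by
      rw [Nat.factorial_succ, Nat.factorial_succ]
    rw [this]; push_cast; ring
  have hfac2 : ((n + 2).factorial : ℝ) = ((n + 2 : ℕ) : ℝ) * ((n + 1).factorial : ℝ) := by
    rw [Nat.factorial_succ]; push_cast; ring
  have hNpos : (0 : ℝ) < ((n + 1).factorial : ℝ) := by positivity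
  -- the explicit function
  set G : ℝ → ℝ := fun x => ((n + 3 : ℕ) : ℝ) * x⁻¹ + (((n + 2).factorial : ℝ))⁻¹ * x ^ (n + 2)
    with hGdef
  have hGg : ∀ x : ℝ, 0 < x → g x = G x := by
    intro x hx
    rw [hg x hx, hGdef]
    have hfp : ((n + 3).factorial : ℝ) ≠ 0 := by positivity
    have hf2 : ((n + 2).factorial : ℝ) ≠ 0 := by positivity
    field_simp
    rw [hfac, hfac2]
    push_cast
    ring
  -- derivative
  have hG' : ∀ x : ℝ, 0 < x →
      HasDerivAt G ((x ^ (n + 3) - c) / (((n + 1).factorial : ℝ) * x ^ 2)) x := by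
    intro x hx
    have h1 := (hasDerivAt_inv hx.ne').const_mul ((n + 3 : ℕ) : ℝ)
    have h2 := (hasDerivAt_pow (n + 2) x).const_mul (((n + 2).factorial : ℝ))⁻¹
    have h := h1.add h2
    refine h.congr_deriv ?_
    have hf2 : ((n + 2).factorial : ℝ) ≠ 0 := by positivity
    have hxne : x ≠ 0 := hx.ne'
    rw [show n + 2 - 1 = n + 1 by omega]
    rw [hcdef, hfac2]
    field_simp
    ring
  -- monotonicity
  have hanti : StrictAntiOn G (Set.Ioc 0 xstar) := by
    apply strictAntiOn_of_deriv_neg (convex_Ioc 0 xstar)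
    · exact fun x hx => ((hG' x hx.1).continuousAt).continuousWithinAt
    · intro x hx
      rw [interior_Ioc] at hx
      rw [(hG' x hx.1).deriv]
      apply div_neg_of_neg_of_pos
      · have : x ^ (n + 3) < xstar ^ (n + 3) :=
          pow_lt_pow_left₀ hx.2 hx.1.le (by omega)
        rw [hxp] at this; linarith
      · exact mul_pos hNpos (pow_pos hx.1 2)
  have hmono : StrictMonoOn G (Set.Ici xstar) := by
    apply strictMonoOn_of_deriv_pos (convex_Ici xstar)
    · intro x hx
      exact ((hG' x (lt_of_lt_of_le hxpos hx)).continuousAt).continuousWithinAt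
    · intro x hx
      rw [interior_Ici] at hx
      have hx0 : 0 < x := hxpos.trans hx
      rw [(hG' x hx0).deriv]
      apply div_pos
      · have : xstar ^ (n + 3) < x ^ (n + 3) :=
          pow_lt_pow_left₀ hx hxpos.le (by omega)
        rw [hxp] at this; linarith
      · exact mul_pos hNpos (pow_pos hx0 2)
  -- strict minimality
  have hstrict : ∀ x : ℝ, 0 < x → x ≠ xstar → g xstar < g x := by
    intro x hx hne'
    rw [hGg x hx, hGg xstar hxpos]
    rcases lt_or_gt_of_ne hne' with h | h
    · exact hanti ⟨hx, h.le⟩ ⟨hxpos, le_refl _⟩ h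
    · exact hmono (Set.self_mem_Ici) (le_of_lt h) h
  -- value
  have hval : g xstar = (((n + 3 : ℕ) : ℝ) / c ^ ((1 : ℝ) / ((n + 3 : ℕ) : ℝ))) *
      (1 + 1 / (((n + 3 : ℕ) : ℝ) - 1)) := by
    rw [hg xstar hxpos, hxp, ← hxstar]
    congr 1
    rw [hfac]
    have h2 : ((n + 2 : ℕ) : ℝ) = ((n + 3 : ℕ) : ℝ) - 1 := by push_cast; ring
    rw [hcdef, ← h2]
    have : ((n + 2 : ℕ) : ℝ) ≠ 0 := by positivity
    field_simp
  -- 1 < g xstar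
  have hcnat : (n + 3) * (n + 1).factorial < (n + 3) ^ (n + 3) := by
    calc (n + 3) * (n + 1).factorial ≤ (n + 3) * (n + 1) ^ (n + 1) :=
          Nat.mul_le_mul_left _ (Nat.factorial_le_pow _)
      _ ≤ (n + 3) * (n + 3) ^ (n + 1) := by
          apply Nat.mul_le_mul_left
          exact Nat.pow_le_pow_left (by omega) _
      _ = (n + 3) ^ (n + 2) := by rw [pow_succ]; ring
      _ < (n + 3) ^ (n + 3) := Nat.pow_lt_pow_succ (by omega)
  have hxlt : xstar < ((n + 3 : ℕ) : ℝ) := by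
    apply lt_of_pow_lt_pow_left₀ (n + 3) (by positivity)
    rw [hxp, hcdef]
    have := hcnat
    calc ((n + 3 : ℕ) : ℝ) * ((n + 1).factorial : ℝ)
        = (((n + 3) * (n + 1).factorial : ℕ) : ℝ) := by push_cast; ring
      _ < (((n + 3) ^ (n + 3) : ℕ) : ℝ) := by exact_mod_cast this
      _ = ((n + 3 : ℕ) : ℝ) ^ (n + 3) := by push_cast; ring
  have hgt1 : 1 < g xstar := by
    rw [hg xstar hxpos, hxp]
    have h1 : 1 < ((n + 3 : ℕ) : ℝ) / xstar := (one_lt_div hxpos).2 hxlt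
    have h2 : (0 : ℝ) < c / ((n + 3).factorial : ℝ) := by positivity
    nlinarith
  exact ⟨hxpos, fun x hx => by
    rcases eq_or_ne x xstar with rfl | hne'
    · exact le_refl _
    · exact (hstrict x hx hne').le, hstrict, hval, hgt1⟩
end

section
/- If p ≥ 3 is an even integer and λ ∈ ℝ with |λ| ≥ 1, then |f_λ(x)| > |x| for every real number x. -/
open Complex Finset
open scoped Nat

lemma aux_sum_root (p : ℕ) (hp : 3 ≤ p) (n : ℕ) :
    ∑ k ∈ Finset.range p, (Complex.exp (2 * Real.pi * Complex.I / p)) ^ (k * n) =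
      if p ∣ n then (p : ℂ) else 0 := by
  have hp0 : (p : ℂ) ≠ 0 := Nat.cast_ne_zero.2 (by omega)
  set ω : ℂ := Complex.exp (2 * Real.pi * Complex.I / p) with hω
  have hωp : ω ^ p = 1 := by
    rw [hω, ← Complex.exp_nat_mul]
    have : (p : ℂ) * (2 * Real.pi * Complex.I / p) = 2 * Real.pi * Complex.I := by
      field_simp
    rw [this, Complex.exp_two_pi_mul_I]
  have key : ∀ k, ω ^ (k * n) = (ω ^ n) ^ k := by
    intro k; rw [← pow_mul, Nat.mul_comm]
  simp_rw [key]
  by_cases hdvd : p ∣ n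
  · obtain ⟨m, rfl⟩ := hdvd
    have : ω ^ (p * m) = 1 := by rw [pow_mul, hωp, one_pow]
    simp [this]
  · have hne : ω ^ n ≠ 1 := by
      intro h
      rw [hω, ← Complex.exp_nat_mul, Complex.exp_eq_one_iff] at h
      obtain ⟨m, hm⟩ := h
      have h2 : (2 * Real.pi * Complex.I) ≠ 0 := by
        simp [Complex.I_ne_zero, Real.pi_ne_zero]
      have hnm : (n : ℂ) = m * p := by
        field_simp at hm
        linear_combination hm
      have hZ : (n : ℤ) = m * p := by exact_mod_cast hnm
      exact hdvd (Int.natCast_dvd_natCast.mp ⟨m, by linarith⟩)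
    rw [geom_sum_eq hne]
    have : (ω ^ n) ^ p = 1 := by rw [← pow_mul, mul_comm, pow_mul, hωp, one_pow]
    rw [this, sub_self, zero_div]
    simp [hdvd]

lemma aux_series (p : ℕ) (hp : 3 ≤ p) (z : ℂ) :
    ∑ k ∈ Finset.range p, Complex.exp ((Complex.exp (2 * Real.pi * Complex.I / p)) ^ k * z) =
      (p : ℂ) * ∑' m : ℕ, z ^ (p * m) / (p * m)! := by
  set ω : ℂ := Complex.exp (2 * Real.pi * Complex.I / p) with hω
  have hexp : ∀ w : ℂ, Complex.exp w = ∑' n : ℕ, w ^ n / n ! := by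
    intro w
    rw [Complex.exp_eq_exp_ℂ, NormedSpace.exp_eq_tsum_div]
  have hsummable : ∀ k : ℕ, Summable (fun n : ℕ => (ω ^ k * z) ^ n / n !) :=
    fun k => NormedSpace.expSeries_div_summable (ω ^ k * z)
  calc ∑ k ∈ Finset.range p, Complex.exp (ω ^ k * z)
      = ∑ k ∈ Finset.range p, ∑' n : ℕ, (ω ^ k * z) ^ n / n ! := by
        simp_rw [hexp]
    _ = ∑' n : ℕ, ∑ k ∈ Finset.range p, (ω ^ k * z) ^ n / n ! :=
        (Summable.tsum_finsetSum (fun k _ => hsummable k)).symm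
    _ = ∑' n : ℕ, (if p ∣ n then (p : ℂ) else 0) * (z ^ n / n !) := by
        refine tsum_congr fun n => ?_
        simp_rw [mul_pow, ← pow_mul, mul_div_assoc]
        rw [← Finset.sum_mul, aux_sum_root p hp n]
    _ = ∑' m : ℕ, (if p ∣ p * m then (p : ℂ) else 0) * (z ^ (p * m) / (p * m)!) := by
        refine (Function.Injective.tsum_eq (g := fun m => p * m) ?_ ?_).symm
        · intro a b hab
          exact Nat.eq_of_mul_eq_mul_left (by omega) hab
        · intro n hn
          simp only [Function.mem_support] at hn
          by_cases hdvd : p ∣ n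
          · obtain ⟨m, rfl⟩ := hdvd; exact ⟨m, rfl⟩
          · simp [hdvd] at hn
    _ = (p : ℂ) * ∑' m : ℕ, z ^ (p * m) / (p * m)! := by
        rw [← tsum_mul_left]
        exact tsum_congr fun m => by simp [Dvd.intro m rfl]

lemma aux_arith (p : ℕ) (hp : 3 ≤ p) (t : ℝ) (ht : 0 ≤ t) :
    t < p + p * t ^ p / p ! := by
  have hfac : (0 : ℝ) < p ! := by positivity
  rcases lt_or_ge t p with h | h
  · have : (0:ℝ) ≤ p * t ^ p / p ! := by positivity
    linarith
  · -- p ≤ t; show p * t^p / p! ≥ t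
    have hp0 : (0 : ℝ) < p := by positivity
    have ht0 : (0 : ℝ) < t := lt_of_lt_of_le hp0 h
    have hfac' : (p : ℝ) * (p - 1)! = p ! := by
      exact_mod_cast congrArg (Nat.cast : ℕ → ℝ) (Nat.mul_factorial_pred (by omega))
    have h1 : ((p - 1)! : ℝ) ≤ t ^ (p - 1) := by
      calc ((p - 1)! : ℝ) ≤ ((p - 1 : ℕ) : ℝ) ^ (p - 1) := by
            exact_mod_cast Nat.factorial_le_pow (p - 1)
        _ ≤ t ^ (p - 1) := by
            apply pow_le_pow_left₀ (by positivity)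
            have : ((p - 1 : ℕ) : ℝ) ≤ (p : ℝ) := by
              exact_mod_cast Nat.cast_le.2 (Nat.sub_le p 1)
            linarith
    have h2 : t ≤ p * t ^ p / p ! := by
      rw [le_div_iff₀ hfac, ← hfac']
      have hpow : t ^ p = t * t ^ (p - 1) := by
        rw [← pow_succ']
        congr 1
        omega
      calc t * ((p:ℝ) * (p-1)!) = (p:ℝ) * (t * (p-1)!) := by ring
        _ ≤ (p:ℝ) * (t * t ^ (p-1)) := by
            apply mul_le_mul_of_nonneg_left _ (le_of_lt hp0)
            exact mul_le_mul_of_nonneg_left h1 ht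
        _ = (p:ℝ) * t ^ p := by rw [hpow]
    linarith

theorem f_lambda_abs_gt_on_real (p : ℕ) (hp : 3 ≤ p) (hpeven : Even p)
    (lam : ℝ) (hlam : 1 ≤ |lam|)
    (f : ℂ → ℂ)
    (hf : ∀ z : ℂ, f z = lam * ∑ k ∈ Finset.range p,
      Complex.exp ((Complex.exp (2 * Real.pi * Complex.I / p)) ^ k * z))
    (x : ℝ) : |x| < ‖f x‖ := by
  have key := aux_series p hp (x : ℂ)
  -- real series
  set S : ℝ := ∑' m : ℕ, x ^ (p * m) / (p * m)! with hS
  have hsum : Summable (fun m : ℕ => x ^ (p * m) / (p * m)! : ℕ → ℝ) := by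
    apply (Real.summable_pow_div_factorial x).comp_injective
    intro a b hab
    exact Nat.eq_of_mul_eq_mul_left (by omega) hab
  have hcast : (∑' m : ℕ, (x : ℂ) ^ (p * m) / (p * m)!) = (S : ℂ) := by
    rw [hS, Complex.ofReal_tsum]
    exact tsum_congr fun m => by push_cast; ring
  have hfx : f x = ((lam * (p * S) : ℝ) : ℂ) := by
    rw [hf, key, hcast]; push_cast; ring
  rw [hfx, Complex.norm_real, Real.norm_eq_abs, abs_mul]
  -- nonnegativity of terms
  have hterm : ∀ m : ℕ, 0 ≤ x ^ (p * m) / (p * m)! := by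
    intro m
    have : Even (p * m) := hpeven.mul_right m
    have := this.pow_nonneg x
    positivity
  -- S ≥ 1 + x^p / p!
  have hS2 : 1 + x ^ p / p ! ≤ S := by
    have := Summable.sum_le_tsum (Finset.range 2) (fun m _ => hterm m) hsum
    rw [Finset.sum_range_succ, Finset.sum_range_one] at this
    simpa using this
  have hxp : x ^ p = |x| ^ p := (hpeven.pow_abs x).symm
  have harith := aux_arith p hp |x| (abs_nonneg x)
  have hpS : (p : ℝ) + p * |x| ^ p / p ! ≤ p * S := by
    have hp0 : (0 : ℝ) < p := by positivity
    have : (p:ℝ) * (1 + x ^ p / p !) ≤ p * S :=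
      mul_le_mul_of_nonneg_left hS2 (le_of_lt hp0)
    rw [hxp] at this
    calc (p:ℝ) + p * |x| ^ p / p ! = p * (1 + |x| ^ p / p !) := by ring
      _ ≤ p * S := this
  have hpS0 : 0 < (p : ℝ) * S := by
    have : (0:ℝ) ≤ p * |x| ^ p / p ! := by positivity
    have hp0 : (0 : ℝ) < p := by positivity
    linarith
  have habs : |(p : ℝ) * S| = p * S := abs_of_pos hpS0
  calc |x| < (p : ℝ) + p * |x| ^ p / p ! := harith
    _ ≤ p * S := hpS
    _ = 1 * |(p : ℝ) * S| := by rw [habs, one_mul]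
    _ ≤ |lam| * |(p : ℝ) * S| := by
        apply mul_le_mul_of_nonneg_right hlam (abs_nonneg _)
end

section
/- Let p ≥ 3 be an even integer and λ ∈ ℝ \ {0}. There exists r₀ > 0 such that for every z = x + iy ∈ ℂ with |x| ≥ r₀ and |y| ≤ π/(2p), one has |f_λ(z)| > |z|. -/
open Complex Finset

private lemma cos_le_aux {p : ℕ} (hp : 3 ≤ p) {k : ℕ} (hk1 : 1 ≤ k) (hk2 : k < p) :
    Real.cos (2 * Real.pi * k / p) ≤ Real.cos (2 * Real.pi / p) := by
  have hπ := Real.pi_pos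
  have hp0 : (0:ℝ) < p := by exact_mod_cast lt_of_lt_of_le (by norm_num : (0:ℕ) < 3) hp
  have hk1' : (1:ℝ) ≤ k := by exact_mod_cast hk1
  have hk2' : (k:ℝ) + 1 ≤ p := by exact_mod_cast hk2
  have hθlb : 2 * Real.pi / p ≤ 2 * Real.pi * k / p := by
    apply div_le_div_of_nonneg_right ?_ hp0.le
    nlinarith
  have hθub : 2 * Real.pi * k / p ≤ 2 * Real.pi - 2 * Real.pi / p := by
    rw [div_le_iff₀ hp0]
    have : 2 * Real.pi / p * p = 2 * Real.pi := div_mul_cancel₀ _ hp0.ne'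
    nlinarith
  have h0 : 0 ≤ 2 * Real.pi / p := by positivity
  rcases le_or_gt (2 * Real.pi * k / p) Real.pi with h | h
  · exact Real.cos_le_cos_of_nonneg_of_le_pi h0 h hθlb
  · calc Real.cos (2 * Real.pi * k / p)
        = Real.cos (2 * Real.pi - 2 * Real.pi * k / p) := (Real.cos_two_pi_sub _).symm
      _ ≤ Real.cos (2 * Real.pi / p) :=
        Real.cos_le_cos_of_nonneg_of_le_pi h0 (by linarith) (by linarith)

private lemma cos_ge_aux {p m : ℕ} (hp : 3 ≤ p) (hm : p = m + m) {k : ℕ} (hk : k < p)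
    (hkm : k ≠ m) :
    -Real.cos (2 * Real.pi / p) ≤ Real.cos (2 * Real.pi * k / p) := by
  have hπ := Real.pi_pos
  have hp0 : (0:ℝ) < p := by exact_mod_cast lt_of_lt_of_le (by norm_num : (0:ℕ) < 3) hp
  have hmp : (m:ℝ) + m = p := by exact_mod_cast hm.symm
  have hdiv : 2 * Real.pi / p * p = 2 * Real.pi := div_mul_cancel₀ _ hp0.ne'
  have hdiv2 : 2 * Real.pi * k / p * p = 2 * Real.pi * k := div_mul_cancel₀ _ hp0.ne'
  have hp3 : (3:ℝ) ≤ p := by exact_mod_cast hp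
  rw [← Real.cos_pi_sub]
  have hq : 0 ≤ 2 * Real.pi / (p:ℝ) := by positivity
  have h0k : 0 ≤ 2 * Real.pi * k / p := by positivity
  have h0 : 0 ≤ Real.pi - 2 * Real.pi / p := by
    rw [sub_nonneg, div_le_iff₀ hp0]; nlinarith
  rcases lt_or_gt_of_ne hkm with hlt | hgt
  · have hkle : (k:ℝ) + 1 ≤ m := by exact_mod_cast hlt
    have hθ : 2 * Real.pi * k / p ≤ Real.pi - 2 * Real.pi / p := by
      rw [div_le_iff₀ hp0] at *
      nlinarith
    exact Real.cos_le_cos_of_nonneg_of_le_pi h0k (by linarith) hθ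
  · have hkge : (m:ℝ) + 1 ≤ k := by exact_mod_cast hgt
    have hk' : (k:ℝ) + 1 ≤ p := by exact_mod_cast hk
    have hθ1 : Real.pi + 2 * Real.pi / p ≤ 2 * Real.pi * k / p := by
      rw [le_div_iff₀ hp0]
      nlinarith
    have hθ2 : 2 * Real.pi * k / p ≤ 2 * Real.pi - 2 * Real.pi / p := by
      rw [div_le_iff₀ hp0]
      nlinarith
    calc Real.cos (Real.pi - 2 * Real.pi / p)
        ≤ Real.cos (2 * Real.pi - 2 * Real.pi * k / p) :=
          Real.cos_le_cos_of_nonneg_of_le_pi (by linarith) (by linarith) (by linarith)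
      _ = Real.cos (2 * Real.pi * k / p) := Real.cos_two_pi_sub _

theorem f_lambda_expanding_on_strip (p : ℕ) (hp : 3 ≤ p) (hpeven : Even p)
    (lam : ℝ) (hlam : lam ≠ 0)
    (f : ℂ → ℂ)
    (hf : ∀ z : ℂ, f z = lam * ∑ k ∈ Finset.range p,
      Complex.exp ((Complex.exp (2 * Real.pi * Complex.I / p)) ^ k * z)) :
    ∃ r₀ > (0 : ℝ), ∀ z : ℂ, r₀ ≤ |z.re| → |z.im| ≤ Real.pi / (2 * p) →
      ‖z‖ < ‖f z‖ := by
  obtain ⟨m, hm⟩ := hpeven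
  have hπ := Real.pi_pos
  have hp0 : (0:ℝ) < p := by exact_mod_cast lt_of_lt_of_le (by norm_num : (0:ℕ) < 3) hp
  have hp3 : (3:ℝ) ≤ p := by exact_mod_cast hp
  set c : ℝ := Real.cos (2 * Real.pi / p) with hcdef
  have hc1 : c < 1 := by
    have h2 : 2 * Real.pi / p ≤ Real.pi := by
      rw [div_le_iff₀ hp0]; nlinarith
    have := Real.cos_lt_cos_of_nonneg_of_le_pi (le_refl 0) h2 (by positivity)
    simpa [Real.cos_zero] using this
  set A : ℝ := |lam| * (p - 1) * Real.exp 1 with hAdef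
  have hlam' : 0 < |lam| := abs_pos.2 hlam
  -- the limit argument
  have hcm : c - 1 < 0 := by linarith
  have hexp1 : Filter.Tendsto (fun t : ℝ => Real.exp ((c - 1) * t)) Filter.atTop (nhds 0) :=
    Real.tendsto_exp_atBot.comp ((Filter.tendsto_const_mul_atBot_of_neg hcm).2 Filter.tendsto_id)
  have hexp2 : Filter.Tendsto (fun t : ℝ => (t + 1) * Real.exp (-t)) Filter.atTop (nhds 0) := by
    have h1 := Real.tendsto_pow_mul_exp_neg_atTop_nhds_zero 1
    have h2 := Real.tendsto_exp_neg_atTop_nhds_zero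
    have := h1.add h2
    simp only [pow_one, add_zero] at this
    convert this using 2 with t
    ring
  have hbr : Filter.Tendsto
      (fun t : ℝ => |lam| - A * Real.exp ((c - 1) * t) - (t + 1) * Real.exp (-t))
      Filter.atTop (nhds (|lam|)) := by
    have h := ((tendsto_const_nhds : Filter.Tendsto (fun _ : ℝ => |lam|) Filter.atTop
      (nhds (|lam|))).sub (hexp1.const_mul A)).sub hexp2
    simpa using h
  have hmain : Filter.Tendsto
      (fun t : ℝ => Real.exp t *
        (|lam| - A * Real.exp ((c - 1) * t) - (t + 1) * Real.exp (-t)))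
      Filter.atTop Filter.atTop :=
    Real.tendsto_exp_atTop.atTop_mul_pos hlam' hbr
  have hkey : ∀ᶠ t in Filter.atTop, t + 1 + A * Real.exp (c * t) < |lam| * Real.exp t := by
    filter_upwards [hmain.eventually_gt_atTop 0] with t ht
    have e1 : Real.exp t * Real.exp ((c - 1) * t) = Real.exp (c * t) := by
      rw [← Real.exp_add]; ring_nf
    have e2 : Real.exp t * Real.exp (-t) = 1 := by
      rw [← Real.exp_add, add_neg_cancel, Real.exp_zero]
    have e3 : Real.exp t * (|lam| - A * Real.exp ((c - 1) * t) - (t + 1) * Real.exp (-t))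
        = |lam| * Real.exp t - A * Real.exp (c * t) - (t + 1) := by
      have h3 : Real.exp t * ((t + 1) * Real.exp (-t)) = t + 1 := by
        calc Real.exp t * ((t + 1) * Real.exp (-t))
            = (t + 1) * (Real.exp t * Real.exp (-t)) := by ring
          _ = t + 1 := by rw [e2, mul_one]
      have h4 : Real.exp t * (A * Real.exp ((c - 1) * t)) = A * Real.exp (c * t) := by
        calc Real.exp t * (A * Real.exp ((c - 1) * t))
            = A * (Real.exp t * Real.exp ((c - 1) * t)) := by ring
          _ = A * Real.exp (c * t) := by rw [e1]
      rw [mul_sub, mul_sub, h3, h4, mul_comm (Real.exp t) |lam|]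
    rw [e3] at ht
    linarith
  obtain ⟨r₁, hr₁⟩ := Filter.eventually_atTop.1 hkey
  refine ⟨max r₁ 1, lt_of_lt_of_le one_pos (le_max_right _ _), ?_⟩
  intro z hzre hzim
  set x := z.re
  set y := z.im
  set t := |x| with htdef
  have ht1 : (1:ℝ) ≤ t := le_trans (le_max_right _ _) hzre
  have htr : r₁ ≤ t := le_trans (le_max_left _ _) hzre
  have hy1 : |y| ≤ 1 := by
    refine hzim.trans ?_
    rw [div_le_one (by positivity)]
    nlinarith [Real.pi_le_four]
  -- setup
  set w : ℂ := Complex.exp (2 * Real.pi * Complex.I / p) with hwdef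
  have hwk : ∀ k : ℕ, w ^ k = Complex.exp (((2 * Real.pi * k / p : ℝ) : ℂ) * Complex.I) := by
    intro k
    rw [hwdef, ← Complex.exp_nat_mul]
    congr 1
    push_cast
    ring
  have hre : ∀ k : ℕ, (w ^ k * z).re
      = Real.cos (2 * Real.pi * k / p) * x - Real.sin (2 * Real.pi * k / p) * y := by
    intro k
    rw [hwk k, Complex.mul_re, Complex.exp_ofReal_mul_I_re, Complex.exp_ofReal_mul_I_im]
  -- generic estimate given a dominant index
  have main : ∀ k₀ ∈ Finset.range p, (w ^ k₀ * z).re = t →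
      (∀ k ∈ Finset.range p, k ≠ k₀ → (w ^ k * z).re ≤ c * t + 1) →
      ‖z‖ < ‖f z‖ := by
    intro k₀ hk₀ hdom hrest
    have hzbound : ‖z‖ ≤ t + 1 := by
      have := Complex.norm_le_abs_re_add_abs_im z
      calc ‖z‖ ≤ |x| + |y| := this
        _ ≤ t + 1 := by rw [htdef]; linarith
    set S := ∑ k ∈ Finset.range p, Complex.exp (w ^ k * z) with hSdef
    have hsplit : Complex.exp (w ^ k₀ * z) + ∑ k ∈ (Finset.range p).erase k₀,
        Complex.exp (w ^ k * z) = S := Finset.add_sum_erase _ (fun k => Complex.exp (w ^ k * z)) hk₀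
    have hrestbound : ‖(∑ k ∈ (Finset.range p).erase k₀, Complex.exp (w ^ k * z))‖
        ≤ ((p:ℝ) - 1) * Real.exp (c * t + 1) := by
      calc ‖(∑ k ∈ (Finset.range p).erase k₀, Complex.exp (w ^ k * z))‖
          ≤ ∑ k ∈ (Finset.range p).erase k₀, ‖(Complex.exp (w ^ k * z))‖ := by
            exact norm_sum_le _ _
        _ ≤ ∑ k ∈ (Finset.range p).erase k₀, Real.exp (c * t + 1) := by
            apply Finset.sum_le_sum
            intro k hk
            rw [Complex.norm_exp]
            exact Real.exp_le_exp.2 (hrest k (Finset.mem_of_mem_erase hk)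
              (Finset.ne_of_mem_erase hk))
        _ = ((p:ℝ) - 1) * Real.exp (c * t + 1) := by
            rw [Finset.sum_const, Finset.card_erase_of_mem hk₀, Finset.card_range,
              nsmul_eq_mul, Nat.cast_sub (by omega), Nat.cast_one]
    have hSlb : Real.exp t - ((p:ℝ) - 1) * Real.exp (c * t + 1) ≤ ‖S‖ := by
      have h1 : ‖(Complex.exp (w ^ k₀ * z))‖ = Real.exp t := by
        rw [Complex.norm_exp, hdom]
      have h2 : ‖(Complex.exp (w ^ k₀ * z))‖ ≤ ‖S‖
          + ‖(∑ k ∈ (Finset.range p).erase k₀, Complex.exp (w ^ k * z))‖ := by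
        calc ‖(Complex.exp (w ^ k₀ * z))‖
            = ‖(S - ∑ k ∈ (Finset.range p).erase k₀, Complex.exp (w ^ k * z))‖ := by
              rw [← hsplit]; congr 1; ring
          _ ≤ _ := norm_sub_le _ _
      linarith [h1 ▸ h2, hrestbound]
    have hfz : ‖f z‖ = |lam| * ‖S‖ := by
      rw [hf z, norm_mul, Complex.norm_real, Real.norm_eq_abs]
    have hAe : |lam| * (((p:ℝ) - 1) * Real.exp (c * t + 1)) = A * Real.exp (c * t) := by
      rw [hAdef, Real.exp_add]; ring
    have hkey' := hr₁ t htr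
    calc ‖z‖ ≤ t + 1 := hzbound
      _ < |lam| * Real.exp t - A * Real.exp (c * t) := by linarith
      _ = |lam| * (Real.exp t - ((p:ℝ) - 1) * Real.exp (c * t + 1)) := by
          rw [mul_sub, hAe]
      _ ≤ |lam| * ‖S‖ := by
          apply mul_le_mul_of_nonneg_left hSlb hlam'.le
      _ = ‖f z‖ := hfz.symm
  -- bound for nondominant terms
  have hsin : ∀ k : ℕ, -(Real.sin (2 * Real.pi * k / p) * y) ≤ 1 := by
    intro k
    have h1 : |Real.sin (2 * Real.pi * k / p) * y| ≤ 1 := by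
      rw [abs_mul]
      calc |Real.sin (2 * Real.pi * k / p)| * |y| ≤ 1 * 1 :=
        mul_le_mul (Real.abs_sin_le_one _) hy1 (abs_nonneg _) zero_le_one
      _ = 1 := one_mul 1
    linarith [neg_abs_le (Real.sin (2 * Real.pi * k / p) * y)]
  rcases le_or_gt 0 x with hx | hx
  · -- dominant index 0
    apply main 0 (Finset.mem_range.2 (by omega))
    · rw [hre 0]
      simp only [Nat.cast_zero, mul_zero, zero_div, Real.cos_zero, Real.sin_zero, one_mul,
        zero_mul, sub_zero]
      rw [htdef, _root_.abs_of_nonneg hx]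
    · intro k hk hk0
      rw [hre k]
      have hcosle : Real.cos (2 * Real.pi * k / p) ≤ c :=
        cos_le_aux hp (by omega) (Finset.mem_range.1 hk)
      have h1 : Real.cos (2 * Real.pi * k / p) * x ≤ c * t := by
        rw [htdef, _root_.abs_of_nonneg hx]
        exact mul_le_mul_of_nonneg_right hcosle hx
      linarith [hsin k]
  · -- dominant index m
    have hmrange : m ∈ Finset.range p := Finset.mem_range.2 (by omega)
    apply main m hmrange
    · have hwm : w ^ m = -1 := by
        rw [hwk m]
        have : (2 * Real.pi * m / p : ℝ) = Real.pi := by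
          have : (p:ℝ) = m + m := by exact_mod_cast hm
          rw [this]
          have hm0 : (0:ℝ) < m := by
            have : (3:ℝ) ≤ (m:ℝ) + m := by rw [← this]; exact hp3
            linarith
          field_simp
          ring
        rw [this, Complex.exp_pi_mul_I]
      rw [hwm]
      simp only [neg_one_mul, Complex.neg_re]
      rw [htdef, _root_.abs_of_neg hx]
    · intro k hk hkm
      rw [hre k]
      have hcosge : -c ≤ Real.cos (2 * Real.pi * k / p) :=
        cos_ge_aux hp hm (Finset.mem_range.1 hk) hkm
      have h1 : Real.cos (2 * Real.pi * k / p) * x ≤ c * t := by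
        rw [htdef, _root_.abs_of_neg hx]
        nlinarith
      linarith [hsin k]
end

section
/- Let p ≥ 3 be an integer and λ ∈ ℝ \ {0}. For every ε > 0 there exists R > 0 such that for all z ∈ ℂ with Re z ≥ R and |Im z| ≤ π/(2p), one has |f_λ(z) − λ e^z| < ε·|λ e^z|; that is, f_λ(z) = λ e^z (1 + o(1)) as Re z → ∞ within the horizontal strip |Im z| ≤ π/(2p). -/
open Complex Finset

theorem f_lambda_asymptotic_exp (p : ℕ) (hp : 3 ≤ p) (lam : ℝ) (hlam : lam ≠ 0)
    (f : ℂ → ℂ)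
    (hf : ∀ z : ℂ, f z = lam * ∑ k ∈ Finset.range p,
      Complex.exp ((Complex.exp (2 * Real.pi * Complex.I / p)) ^ k * z))
    (ε : ℝ) (hε : 0 < ε) :
    ∃ R > (0 : ℝ), ∀ z : ℂ, R ≤ z.re → |z.im| ≤ Real.pi / (2 * p) →
      ‖f z - lam * Complex.exp z‖ < ε * ‖(lam : ℂ) * Complex.exp z‖ := by
  have hπ := Real.pi_pos
  have hp0 : (0:ℝ) < p := by positivity
  set θ : ℝ := 2 * Real.pi / p with hθdef
  have hθpos : 0 < θ := by positivity
  have hθltπ : θ < Real.pi := by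
    rw [hθdef, div_lt_iff₀ hp0]
    nlinarith [mul_le_mul_of_nonneg_left (show (3:ℝ) ≤ p by exact_mod_cast hp) hπ.le]
  set c : ℝ := 1 - Real.cos θ with hcdef
  have hc : 0 < c := by
    have := Real.cos_lt_cos_of_nonneg_of_le_pi (le_refl 0) hθltπ.le hθpos
    simp only [Real.cos_zero] at this
    linarith
  -- cos bound for k in [1, p-1]
  have hcos : ∀ k : ℕ, 1 ≤ k → k ≤ p - 1 → Real.cos (2 * Real.pi * k / p) ≤ Real.cos θ := by
    intro k hk1 hk2
    set x : ℝ := 2 * Real.pi * k / p with hxdef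
    have hk1' : (1:ℝ) ≤ k := by exact_mod_cast hk1
    have hk2' : (k:ℝ) ≤ (p:ℝ) - 1 := by
      have : (k:ℝ) ≤ ((p - 1 : ℕ) : ℝ) := by exact_mod_cast hk2
      rwa [Nat.cast_sub (by omega), Nat.cast_one] at this
    have hxge : θ ≤ x := by
      rw [hθdef, hxdef, div_le_div_iff₀ hp0 hp0]
      nlinarith [mul_nonneg (mul_nonneg (show (0:ℝ) ≤ (k:ℝ) - 1 by linarith) hπ.le) hp0.le]
    have hxle : x ≤ 2 * Real.pi - θ := by
      rw [hxdef, hθdef, div_le_iff₀ hp0, sub_mul, div_mul_cancel₀ _ hp0.ne']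
      nlinarith [mul_le_mul_of_nonneg_left hk2' (by positivity : (0:ℝ) ≤ 2 * Real.pi)]
    rcases le_or_gt x Real.pi with h | h
    · exact Real.cos_le_cos_of_nonneg_of_le_pi hθpos.le h hxge
    · rw [← Real.cos_two_pi_sub x]
      exact Real.cos_le_cos_of_nonneg_of_le_pi hθpos.le (by linarith) (by linarith)
  -- choose R
  have htend : Filter.Tendsto (fun x : ℝ => (p:ℝ) * Real.exp (Real.pi / (2*p) - c * x))
      Filter.atTop (nhds 0) := by
    have h1 : Filter.Tendsto (fun x : ℝ => Real.pi / (2*p) - c * x) Filter.atTop Filter.atBot := by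
      apply Filter.tendsto_atBot_add_const_left
      exact Filter.tendsto_neg_atBot_iff.mpr ((Filter.tendsto_const_mul_atTop_of_pos hc).mpr
        Filter.tendsto_id)
    have := (Real.tendsto_exp_atBot.comp h1).const_mul (p:ℝ)
    simpa using this
  have hev : ∀ᶠ x in Filter.atTop, (p:ℝ) * Real.exp (Real.pi / (2*p) - c * x) < ε :=
    htend.eventually (gt_mem_nhds hε)
  obtain ⟨N, hN⟩ := Filter.eventually_atTop.mp hev
  refine ⟨max N 1, lt_of_lt_of_le one_pos (le_max_right _ _), ?_⟩
  intro z hzre hzim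
  set x := z.re
  set y := z.im
  have hx1 : (1:ℝ) ≤ x := le_trans (le_max_right _ _) hzre
  have hxN : N ≤ x := le_trans (le_max_left _ _) hzre
  have hkey := hN x hxN
  -- rewrite difference
  set ω : ℂ := Complex.exp (2 * Real.pi * Complex.I / p) with hωdef
  have hω0 : ω ^ 0 * z = z := by simp
  have hmem : (0:ℕ) ∈ Finset.range p := Finset.mem_range.mpr (by omega)
  have hdiff : f z - lam * Complex.exp z
      = lam * ∑ k ∈ (Finset.range p).erase 0, Complex.exp (ω ^ k * z) := by
    rw [hf z, ← Finset.add_sum_erase _ _ hmem, hω0]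
    ring
  -- per-term bound
  have hterm : ∀ k ∈ (Finset.range p).erase 0,
      ‖Complex.exp (ω ^ k * z)‖ ≤ Real.exp ((1 - c) * x + Real.pi / (2*p)) := by
    intro k hk
    obtain ⟨hk0, hkp⟩ := Finset.mem_erase.mp hk
    have hkp' := Finset.mem_range.mp hkp
    have hωk : ω ^ k = Complex.exp ((2 * Real.pi * k / p : ℝ) * Complex.I) := by
      rw [hωdef, ← Complex.exp_nat_mul]
      congr 1
      push_cast
      field_simp
    have hre : (ω ^ k * z).re = Real.cos (2 * Real.pi * k / p) * x
        - Real.sin (2 * Real.pi * k / p) * y := by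
      rw [Complex.mul_re, hωk, Complex.exp_ofReal_mul_I_re, Complex.exp_ofReal_mul_I_im]
    rw [Complex.norm_exp, hre, Real.exp_le_exp]
    have h1 : Real.cos (2 * Real.pi * k / p) * x ≤ (1 - c) * x := by
      apply mul_le_mul_of_nonneg_right _ (by linarith)
      have := hcos k (by omega) (by omega)
      simpa [hcdef] using this
    have h2 : - (Real.sin (2 * Real.pi * k / p) * y) ≤ Real.pi / (2*p) := by
      calc -(Real.sin (2 * Real.pi * k / p) * y) ≤ |Real.sin (2 * Real.pi * k / p) * y| :=
            neg_le_abs _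
        _ = |Real.sin (2 * Real.pi * k / p)| * |y| := abs_mul _ _
        _ ≤ 1 * (Real.pi / (2*p)) := by
            apply mul_le_mul (Real.abs_sin_le_one _) hzim (abs_nonneg _) zero_le_one
        _ = Real.pi / (2*p) := one_mul _
    linarith
  -- put it together
  have hsum : ‖f z - lam * Complex.exp z‖
      ≤ |lam| * ((p:ℝ) * Real.exp ((1 - c) * x + Real.pi / (2*p))) := by
    rw [hdiff, norm_mul, Complex.norm_real, Real.norm_eq_abs]
    apply mul_le_mul_of_nonneg_left _ (abs_nonneg _)
    calc ‖∑ k ∈ (Finset.range p).erase 0, Complex.exp (ω ^ k * z)‖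
        ≤ ∑ k ∈ (Finset.range p).erase 0, ‖Complex.exp (ω ^ k * z)‖ := by
          simpa using
            norm_sum_le ((Finset.range p).erase 0) (fun k => Complex.exp (ω ^ k * z))
      _ ≤ ∑ _k ∈ (Finset.range p).erase 0, Real.exp ((1 - c) * x + Real.pi / (2*p)) :=
          Finset.sum_le_sum hterm
      _ = ((Finset.range p).erase 0).card * Real.exp ((1 - c) * x + Real.pi / (2*p)) := by
          rw [Finset.sum_const, nsmul_eq_mul]
      _ ≤ (p:ℝ) * Real.exp ((1 - c) * x + Real.pi / (2*p)) := by
          apply mul_le_mul_of_nonneg_right _ (Real.exp_pos _).le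
          exact_mod_cast Finset.card_le_card (Finset.erase_subset _ _) |>.trans
            (le_of_eq (Finset.card_range p))
  have hrhs : ε * ‖(lam : ℂ) * Complex.exp z‖ = ε * (|lam| * Real.exp x) := by
    rw [norm_mul, Complex.norm_real, Real.norm_eq_abs, Complex.norm_exp]
  rw [hrhs]
  have hlam0 : 0 < |lam| := abs_pos.mpr hlam
  calc ‖f z - lam * Complex.exp z‖
      ≤ |lam| * ((p:ℝ) * Real.exp ((1 - c) * x + Real.pi / (2*p))) := hsum
    _ = |lam| * Real.exp x * ((p:ℝ) * Real.exp (Real.pi / (2*p) - c * x)) := by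
        rw [show (1 - c) * x + Real.pi / (2*p) = x + (Real.pi / (2*p) - c * x) by ring,
          Real.exp_add]
        ring
    _ < |lam| * Real.exp x * ε := by
        apply mul_lt_mul_of_pos_left hkey (by positivity)
    _ = ε * (|lam| * Real.exp x) := by ring
end
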